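/- Let D ≥ 1 and K ≥ 1 be integers, set s = (D+1)/2, and let c : ℤ^D → ℝ satisfy 0 ≤ c_k ≤ (2π)^{-D/2} for every multi-index k ∈ ℤ^D. Then the truncation error ε_K defined by ε_K² = Σ_{k ∉ [-K,K]^D} c_k² / (1 + (2π‖k‖₂)²)^s satisfies ε_K² < √(8/π³) · √D · π^{-2D} · K^{-1}; in particular ε_K < E(D)/√K where E(D) = (2/π)^{3/4} D^{1/4} π^{-D}. -/

import Mathlib

open scoped BigOperators

open Real
open scoped ENNReal

section Aux

lemma tele_tail (K : ℕ) (hK : 1 ≤ K) :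
    ∑' n : ℕ, ENNReal.ofReal ((((n : ℝ) + K + 1)) ^ 2)⁻¹ ≤ ENNReal.ofReal (1 / K) := by
  set f : ℕ → ℝ := fun n => ((n : ℝ) + K)⁻¹ with hf
  have hKpos : (0:ℝ) < K := by exact_mod_cast hK
  have hpos : ∀ n : ℕ, (0:ℝ) < (n : ℝ) + K := fun n => by positivity
  have hg_nonneg : ∀ n : ℕ, 0 ≤ f n - f (n+1) := by
    intro n
    have h1 : f (n+1) ≤ f n := by
      apply inv_anti₀ (hpos n)
      push_cast; linarith
    linarith
  have hsum : HasSum (fun n => f n - f (n+1)) (1 / K) := by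
    rw [hasSum_iff_tendsto_nat_of_nonneg hg_nonneg]
    have hps : ∀ n : ℕ, ∑ i ∈ Finset.range n, (f i - f (i+1)) = f 0 - f n := by
      intro n; exact Finset.sum_range_sub' f n
    simp only [hps]
    have h0 : f 0 = 1 / K := by simp [hf]
    rw [h0]
    have : Filter.Tendsto f Filter.atTop (nhds 0) := by
      apply Filter.Tendsto.inv_tendsto_atTop
      exact Filter.tendsto_atTop_add_const_right _ (K : ℝ) tendsto_natCast_atTop_atTop
    simpa using Filter.Tendsto.const_sub (1 / (K:ℝ)) this
  calc ∑' n : ℕ, ENNReal.ofReal ((((n : ℝ) + K + 1)) ^ 2)⁻¹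
      ≤ ∑' n : ℕ, ENNReal.ofReal (f n - f (n+1)) := by
        apply ENNReal.tsum_le_tsum
        intro n
        apply ENNReal.ofReal_le_ofReal
        have h1 : f n - f (n+1) = (((n:ℝ) + K) * ((n:ℝ) + K + 1))⁻¹ := by
          rw [hf]; push_cast
          rw [inv_sub_inv (by positivity) (by positivity)]
          ring_nf
        rw [h1]
        apply inv_anti₀ (by positivity)
        nlinarith [hpos n]
    _ = ENNReal.ofReal (1 / K) := by
        rw [← ENNReal.ofReal_tsum_of_nonneg hg_nonneg hsum.summable, hsum.tsum_eq]

lemma nat_ineq : ∀ n : ℕ, (n + 1) * 3 ^ n ≤ 4 ^ (n + 1) := by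
  intro n
  induction n with
  | zero => norm_num
  | succ m ih =>
    rcases Nat.lt_or_ge m 2 with hm | hm
    · interval_cases m <;> norm_num
    · calc (m + 2) * 3 ^ (m+1) = 3 * (m + 2) * 3 ^ m := by ring
        _ ≤ 4 * ((m + 1) * 3 ^ m) := by
            have : 3 * (m + 2) ≤ 4 * (m + 1) := by omega
            calc 3 * (m + 2) * 3 ^ m ≤ 4 * (m+1) * 3 ^ m :=
              Nat.mul_le_mul_right _ this
              _ = 4 * ((m+1) * 3^m) := by ring
        _ ≤ 4 * 4 ^ (m + 1) := Nat.mul_le_mul_left _ ih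
        _ = 4 ^ (m + 2) := by ring

lemma pointwise_bound (D K : ℕ) (hK : 1 ≤ K)
    (c : (Fin D → ℤ) → ℝ)
    (hc0 : ∀ k, 0 ≤ c k) (hc1 : ∀ k, c k ≤ (2 * Real.pi) ^ (-(D : ℝ) / 2))
    (k : Fin D → ℤ) (d : Fin D) (hKd : (K : ℤ) < |k d|) :
    (c k) ^ 2 / (1 + (2 * Real.pi * Real.sqrt (∑ d', ((k d' : ℝ)) ^ 2)) ^ 2) ^ (((D : ℝ) + 1) / 2)
      ≤ ((2 * Real.pi) ^ (2 * D + 1))⁻¹ * (((k d).natAbs : ℝ) ^ (D + 1))⁻¹ := by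
  have hπ : (0:ℝ) < 2 * π := by positivity
  set n : ℝ := ((k d).natAbs : ℝ) with hn
  have hn1 : (1:ℝ) ≤ n := by
    have h1 : 1 ≤ (k d).natAbs := by
      have := hKd
      rw [Int.abs_eq_natAbs] at this
      omega
    rw [hn]; exact_mod_cast h1
  have hn0 : (0:ℝ) < n := lt_of_lt_of_le one_pos hn1
  -- numerator bound
  have hnum : c k ^ 2 ≤ ((2*π)^D)⁻¹ := by
    have h1 : c k ^2 ≤ ((2*π)^(-(D:ℝ)/2))^2 := pow_le_pow_left₀ (hc0 k) (hc1 k) 2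
    have h2 : ((2*π:ℝ)^(-(D:ℝ)/2))^(2:ℕ) = ((2*π)^D)⁻¹ := by
      rw [← Real.rpow_natCast ((2*π:ℝ)^(-(D:ℝ)/2)) 2, ← Real.rpow_mul hπ.le]
      rw [show (-(D:ℝ)/2) * ((2:ℕ):ℝ) = -(D:ℝ) by push_cast; ring]
      rw [Real.rpow_neg hπ.le, Real.rpow_natCast]
    rw [h2] at h1; exact h1
  -- denominator bound
  set S : ℝ := ∑ d', ((k d' : ℝ)) ^ 2 with hSdef
  have hS0 : 0 ≤ S := Finset.sum_nonneg fun i _ => sq_nonneg _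
  have hS : ((k d : ℝ))^2 ≤ S :=
    Finset.single_le_sum (fun i _ => sq_nonneg ((k i : ℝ))) (Finset.mem_univ d)
  have hkd : ((k d : ℝ))^2 = n^2 := by
    simp [hn, Nat.cast_natAbs, Int.cast_abs, sq_abs]
  have hden1 : (2*π*n)^2 ≤ 1 + (2*π*Real.sqrt S)^2 := by
    have h3 : (2*π*Real.sqrt S)^2 = (2*π)^2 * S := by
      rw [mul_pow, Real.sq_sqrt hS0]
    have h4 : (2*π*n)^2 = (2*π)^2 * n^2 := by ring
    rw [h3, h4, ← hkd]
    nlinarith [sq_nonneg (2*π)]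
  have hmono : ((2*π*n)^2) ^ (((D:ℝ)+1)/2) ≤ (1 + (2*π*Real.sqrt S)^2) ^ (((D:ℝ)+1)/2) :=
    Real.rpow_le_rpow (by positivity) hden1 (by positivity)
  have hval : (((2*π*n)^2 : ℝ)) ^ (((D:ℝ)+1)/2) = (2*π*n)^(D+1) := by
    rw [← Real.rpow_natCast (2*π*n) 2, ← Real.rpow_mul (by positivity)]
    rw [show ((2:ℕ):ℝ) * (((D:ℝ)+1)/2) = ((D+1 : ℕ):ℝ) by push_cast; ring]
    rw [Real.rpow_natCast]
  rw [hval] at hmono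
  calc (c k) ^ 2 / (1 + (2*π*Real.sqrt S)^2) ^ (((D:ℝ)+1)/2)
      ≤ ((2*π)^D)⁻¹ / ((2*π*n)^(D+1)) :=
        div_le_div₀ (by positivity) hnum (by positivity) hmono
    _ = ((2 * π) ^ (2 * D + 1))⁻¹ * (n ^ (D + 1))⁻¹ := by
        rw [mul_pow, show 2*D+1 = D + (D+1) by ring, pow_add]
        have hπ' : (2*π:ℝ) ≠ 0 := hπ.ne'
        field_simp
        ring

lemma key_bound (N K : ℕ) (hK : 1 ≤ K)
    (c : (Fin (N+1) → ℤ) → ℝ)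
    (hc0 : ∀ k, 0 ≤ c k)
    (hc1 : ∀ k, c k ≤ (2 * Real.pi) ^ (-((N+1 : ℕ) : ℝ) / 2)) :
    (∑' k : {k : Fin (N+1) → ℤ // ∃ d, (K : ℤ) < |k d|},
        (c k.1) ^ 2 /
          (1 + (2 * Real.pi * Real.sqrt (∑ d, ((k.1 d : ℝ)) ^ 2)) ^ 2)
            ^ ((((N+1:ℕ) : ℝ) + 1) / 2))
      ≤ ((N:ℝ)+1) * (2 * ((3:ℝ)^N * ((2*Real.pi)^(2*(N+1)+1))⁻¹ / K)) := by
  have hKR : (0:ℝ) < K := by exact_mod_cast hK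
  set A : ℝ := (3:ℝ)^N * ((2*π)^(2*(N+1)+1))⁻¹ with hA
  have hApos : 0 < A := by positivity
  set term : (Fin (N+1) → ℤ) → ℝ := fun k =>
    (c k) ^ 2 /
      (1 + (2 * π * Real.sqrt (∑ d, ((k d : ℝ)) ^ 2)) ^ 2) ^ ((((N+1:ℕ):ℝ) + 1) / 2)
    with hterm
  have hterm_nonneg : ∀ k, 0 ≤ term k := by
    intro k
    apply div_nonneg (sq_nonneg _)
    exact Real.rpow_nonneg (by positivity) _
  set F : (Fin (N+1) → ℤ) → ℝ≥0∞ := fun k => ENNReal.ofReal (term k) with hF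
  set S : Set (Fin (N+1) → ℤ) := {k | ∃ d, (K : ℤ) < |k d|} with hS
  set T : Fin (N+1) → Set (Fin (N+1) → ℤ) :=
    fun d => {k | (K : ℤ) < |k d| ∧ ∀ j, |k j| ≤ |k d|} with hT
  set φ : ℤ → ℝ≥0∞ := fun m =>
    if (K : ℤ) < |m| then ENNReal.ofReal (A * (((m.natAbs : ℝ)) ^ 2)⁻¹) else 0 with hφ
  -- pointwise union bound
  have hpoint : ∀ k, Set.indicator S F k ≤ ∑ d, Set.indicator (T d) F k := by
    intro k
    by_cases hk : k ∈ S
    · obtain ⟨d₀, hd₀⟩ := Finite.exists_max (fun d => |k d|)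
      obtain ⟨d₁, hd₁⟩ := id hk
      have hmem : k ∈ T d₀ := ⟨lt_of_lt_of_le hd₁ (hd₀ d₁), hd₀⟩
      rw [Set.indicator_of_mem hk]
      calc F k = Set.indicator (T d₀) F k := (Set.indicator_of_mem hmem F).symm
        _ ≤ ∑ d, Set.indicator (T d) F k :=
          Finset.single_le_sum (f := fun d => Set.indicator (T d) F k)
            (fun i _ => zero_le) (Finset.mem_univ d₀)
    · rw [Set.indicator_of_notMem hk]; exact zero_le
  -- per-coordinate estimate
  have hperd : ∀ d : Fin (N+1), ∑' k, Set.indicator (T d) F k ≤ ∑' m : ℤ, φ m := by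
    intro d
    set e := Fin.insertNthEquiv (fun _ : Fin (N+1) => ℤ) d with he
    rw [← Equiv.tsum_eq e (Set.indicator (T d) F), ENNReal.tsum_prod']
    apply ENNReal.tsum_le_tsum
    intro m
    by_cases hm : (K : ℤ) < |m|
    · -- inner sum over the box
      have hm1 : 1 ≤ m.natAbs := by
        rw [Int.abs_eq_natAbs] at hm; omega
      set s : Finset (Fin N → ℤ) :=
        Fintype.piFinset (fun _ : Fin N => Finset.Icc (-|m|) |m|) with hs
      have hvanish : ∀ k' ∉ s, Set.indicator (T d) F (e (m, k')) = 0 := by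
        intro k' hk'
        apply Set.indicator_of_notMem
        intro hmem
        apply hk'
        rw [hs, Fintype.mem_piFinset]
        intro i
        rw [Finset.mem_Icc, ← abs_le]
        have h1 := hmem.2 (d.succAbove i)
        have h2 : e (m, k') (d.succAbove i) = k' i := by
          simp [he, Fin.insertNthEquiv]
        have h3 : e (m, k') d = m := by
          simp [he, Fin.insertNthEquiv]
        rwa [h2, h3] at h1
      rw [tsum_eq_sum hvanish]
      set B : ℝ≥0∞ :=
        ENNReal.ofReal (((2*π)^(2*(N+1)+1))⁻¹ * ((m.natAbs : ℝ) ^ (N+2))⁻¹) with hB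
      have hle : ∀ k' ∈ s, Set.indicator (T d) F (e (m, k')) ≤ B := by
        intro k' _
        by_cases hmem : e (m, k') ∈ T d
        · rw [Set.indicator_of_mem hmem]
          apply ENNReal.ofReal_le_ofReal
          have h3 : e (m, k') d = m := by simp [he, Fin.insertNthEquiv]
          have := pointwise_bound (N+1) K hK c hc0 hc1 (e (m, k')) d (by rw [h3]; exact hm)
          rw [h3] at this
          exact this
        · rw [Set.indicator_of_notMem hmem]; exact zero_le
      calc ∑ k' ∈ s, Set.indicator (T d) F (e (m, k')) ≤ ∑ _k' ∈ s, B :=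
            Finset.sum_le_sum hle
        _ = (s.card : ℝ≥0∞) * B := by rw [Finset.sum_const, nsmul_eq_mul]
        _ ≤ φ m := by
            have hcard : s.card = ((2*|m|+1).toNat) ^ N := by
              rw [hs, Fintype.card_piFinset]
              simp [Int.card_Icc]
              congr 1
              omega
            simp only [hφ]
            rw [hcard, if_pos hm]
            rw [show ((((2*|m|+1).toNat) ^ N : ℕ) : ℝ≥0∞)
                = ENNReal.ofReal ((((2*|m|+1).toNat : ℕ) : ℝ) ^ N) by
              rw [← ENNReal.ofReal_natCast]; push_cast; ring_nf]
            rw [← ENNReal.ofReal_mul (by positivity)]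
            apply ENNReal.ofReal_le_ofReal
            have ha : (1:ℝ) ≤ (m.natAbs : ℝ) := by exact_mod_cast hm1
            have hcardR : (((2*|m|+1).toNat : ℕ) : ℝ) ≤ 3 * (m.natAbs : ℝ) := by
              have : (2*|m|+1).toNat = 2 * m.natAbs + 1 := by
                rw [Int.abs_eq_natAbs]; omega
              rw [this]; push_cast
              nlinarith
            calc (((2*|m|+1).toNat : ℕ) : ℝ) ^ N
                  * (((2*π)^(2*(N+1)+1))⁻¹ * ((m.natAbs : ℝ) ^ (N+2))⁻¹)
                ≤ (3 * (m.natAbs : ℝ)) ^ N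
                  * (((2*π)^(2*(N+1)+1))⁻¹ * ((m.natAbs : ℝ) ^ (N+2))⁻¹) := by
                  apply mul_le_mul_of_nonneg_right
                  · exact pow_le_pow_left₀ (by positivity) hcardR N
                  · positivity
              _ = A * (((m.natAbs : ℝ)) ^ 2)⁻¹ := by
                  rw [hA, mul_pow]
                  have hane : (m.natAbs : ℝ) ≠ 0 := by linarith
                  field_simp
                  ring
    · -- m small: everything vanishes
      have h3 : ∀ k', e (m, k') d = m := by
        intro k'; simp [he, Fin.insertNthEquiv]
      have : ∀ k' : Fin N → ℤ, Set.indicator (T d) F (e (m, k')) = 0 := by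
        intro k'
        apply Set.indicator_of_notMem
        intro hmem
        exact hm (by rw [← h3 k']; exact hmem.1)
      rw [tsum_congr this, tsum_zero]
      exact zero_le
  -- sum over m of φ
  have hφsum : ∑' m : ℤ, φ m ≤ 2 * ENNReal.ofReal (A / K) := by
    set i : Bool × ℕ → ℤ :=
      fun p => if p.1 then ((p.2 : ℤ) + K + 1) else -((p.2 : ℤ) + K + 1) with hi
    have hinj : Function.Injective i := by
      rintro ⟨b, n⟩ ⟨b', n'⟩ h
      simp only [hi] at h
      split_ifs at h <;> simp_all <;> omega
    have hsupp : ∀ m, m ∉ Set.range i → φ m = 0 := by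
      intro m hm
      simp only [hφ]
      rw [if_neg]
      intro habs
      apply hm
      rcases lt_abs.mp habs with h | h
      · exact ⟨(true, (m - K - 1).toNat), by simp [hi]; omega⟩
      · exact ⟨(false, (-m - K - 1).toNat), by simp [hi]; omega⟩
    rw [← hinj.tsum_eq (Function.support_subset_iff'.2 hsupp), ENNReal.tsum_prod', tsum_fintype, Fintype.sum_bool]
    have hval : ∀ (b : Bool) (n : ℕ),
        φ (i (b, n)) = ENNReal.ofReal A * ENNReal.ofReal ((((n:ℝ) + K + 1)) ^ 2)⁻¹ := by
      intro b n
      have habs : (i (b, n)).natAbs = n + K + 1 := by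
        cases b <;> simp [hi] <;> omega
      have hcond : (K : ℤ) < |i (b, n)| := by
        rw [Int.abs_eq_natAbs, habs]; omega
      simp only [hφ, if_pos hcond, habs]
      rw [← ENNReal.ofReal_mul hApos.le]
      congr 2
      push_cast; ring_nf
    simp only [hval]
    rw [ENNReal.tsum_mul_left]
    have := tele_tail K hK
    calc ENNReal.ofReal A * (∑' n : ℕ, ENNReal.ofReal ((((n:ℝ) + K + 1)) ^ 2)⁻¹)
          + ENNReal.ofReal A * (∑' n : ℕ, ENNReal.ofReal ((((n:ℝ) + K + 1)) ^ 2)⁻¹)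
        ≤ ENNReal.ofReal A * ENNReal.ofReal (1/K)
          + ENNReal.ofReal A * ENNReal.ofReal (1/K) := by
          gcongr
      _ = 2 * ENNReal.ofReal (A / K) := by
          rw [← ENNReal.ofReal_mul hApos.le, two_mul]
          congr 2 <;> rw [mul_one_div]
  -- assemble in ℝ≥0∞
  set M : ℝ := ((N:ℝ)+1) * (2 * (A / K)) with hM
  have hMnn : 0 ≤ M := by positivity
  have hE : ∑' (x : S), F x ≤ ENNReal.ofReal M := by
    rw [tsum_subtype S F]
    calc ∑' k, Set.indicator S F k ≤ ∑' k, ∑ d, Set.indicator (T d) F k :=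
          ENNReal.tsum_le_tsum hpoint
      _ = ∑ d, ∑' k, Set.indicator (T d) F k :=
          Summable.tsum_finsetSum (fun _ _ => ENNReal.summable)
      _ ≤ ∑ _d : Fin (N+1), 2 * ENNReal.ofReal (A / K) := by
          apply Finset.sum_le_sum
          intro d _
          exact le_trans (hperd d) hφsum
      _ = ENNReal.ofReal M := by
          rw [Finset.sum_const, Finset.card_univ, Fintype.card_fin, nsmul_eq_mul, hM]
          rw [show ((2:ℝ≥0∞) * ENNReal.ofReal (A / K)) = ENNReal.ofReal (2 * (A/K)) by
            rw [ENNReal.ofReal_mul (by norm_num), ENNReal.ofReal_ofNat]]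
          rw [show (((N+1 : ℕ)) : ℝ≥0∞) = ENNReal.ofReal (((N:ℝ)+1)) by
            rw [← ENNReal.ofReal_natCast]; push_cast; ring_nf]
          rw [← ENNReal.ofReal_mul (by positivity)]
  -- back to ℝ
  have hfin : ∑' (x : S), F x ≠ ⊤ := by
    exact ne_top_of_le_ne_top ENNReal.ofReal_ne_top hE
  have heq : (∑' (x : S), F x).toReal = ∑' (x : S), term x.1 := by
    rw [ENNReal.tsum_toReal_eq (fun _ => ENNReal.ofReal_ne_top)]
    exact tsum_congr fun x => ENNReal.toReal_ofReal (hterm_nonneg x.1)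
  have hfinal : (∑' (x : S), term x.1) ≤ M := by
    rw [← heq]
    exact ENNReal.toReal_le_of_le_ofReal hMnn hE
  exact hfinal

end Aux

/-- truncation error bound for the finite-wavenumber approximation of the
`H^{-s}` norm, with `s = (D+1)/2`, coefficients `0 ≤ c k ≤ (2π)^{-D/2}`. -/
theorem truncation_error_bound (D K : ℕ) (hD : 1 ≤ D) (hK : 1 ≤ K)
    (c : (Fin D → ℤ) → ℝ)
    (hc0 : ∀ k, 0 ≤ c k) (hc1 : ∀ k, c k ≤ (2 * Real.pi) ^ (-(D : ℝ) / 2)) :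
    (∑' k : {k : Fin D → ℤ // ∃ d, (K : ℤ) < |k d|},
        (c k.1) ^ 2 /
          (1 + (2 * Real.pi * Real.sqrt (∑ d, ((k.1 d : ℝ)) ^ 2)) ^ 2) ^ (((D : ℝ) + 1) / 2))
      < Real.sqrt (8 / Real.pi ^ 3) * Real.sqrt D / (Real.pi ^ (2 * D) * K) ∧
    Real.sqrt (∑' k : {k : Fin D → ℤ // ∃ d, (K : ℤ) < |k d|},
        (c k.1) ^ 2 /
          (1 + (2 * Real.pi * Real.sqrt (∑ d, ((k.1 d : ℝ)) ^ 2)) ^ 2) ^ (((D : ℝ) + 1) / 2))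
      < (2 / Real.pi) ^ ((3 : ℝ) / 4) * (D : ℝ) ^ ((1 : ℝ) / 4) / Real.pi ^ D / Real.sqrt K := by
  obtain ⟨N, rfl⟩ : ∃ N, D = N + 1 := ⟨D - 1, (Nat.succ_pred_eq_of_pos hD).symm⟩
  have hKR : (0:ℝ) < K := by exact_mod_cast hK
  have hπ : (0:ℝ) < π := Real.pi_pos
  set T : ℝ := ∑' k : {k : Fin (N+1) → ℤ // ∃ d, (K : ℤ) < |k d|},
        (c k.1) ^ 2 /
          (1 + (2 * Real.pi * Real.sqrt (∑ d, ((k.1 d : ℝ)) ^ 2)) ^ 2)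
            ^ ((((N+1:ℕ) : ℝ) + 1) / 2) with hT
  have hTnn : 0 ≤ T := by
    apply tsum_nonneg
    intro k
    apply div_nonneg (sq_nonneg _)
    exact Real.rpow_nonneg (by positivity) _
  have hkey : T ≤ ((N:ℝ)+1) * (2 * ((3:ℝ)^N * ((2*π)^(2*(N+1)+1))⁻¹ / K)) :=
    key_bound N K hK c hc0 hc1
  -- numeric comparison
  set RHS1 : ℝ := Real.sqrt (8 / π ^ 3) * Real.sqrt ((N:ℝ)+1) / (π ^ (2 * (N+1)) * K)
    with hRHS1
  have hnum : ((N:ℝ)+1) * (2 * ((3:ℝ)^N * ((2*π)^(2*(N+1)+1))⁻¹ / K)) < RHS1 := by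
    have hDN : ((N:ℝ)+1) * 3^N ≤ 4^(N+1) := by
      have := nat_ineq N
      have h := (Nat.cast_le (α := ℝ)).2 this
      push_cast at h
      linarith
    have hexp : ((2*π:ℝ))^(2*(N+1)+1) = 2 * 4^(N+1) * π * π^(2*(N+1)) := by
      rw [mul_pow]
      rw [show (2:ℝ)^(2*(N+1)+1) = 2 * 4^(N+1) by
        rw [pow_succ, show (4:ℝ) = 2^2 by norm_num, ← pow_mul]; ring]
      rw [pow_succ]
      ring
    have h4 : (0:ℝ) < 4^(N+1) := by positivity
    have hL : ((N:ℝ)+1) * (2 * ((3:ℝ)^N * ((2*π)^(2*(N+1)+1))⁻¹ / K))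
        = (((N:ℝ)+1) * 3^N / 4^(N+1)) * (1 / (π * π^(2*(N+1)) * K)) := by
      rw [hexp]
      field_simp
    have hstep1 : ((N:ℝ)+1) * (2 * ((3:ℝ)^N * ((2*π)^(2*(N+1)+1))⁻¹ / K))
        ≤ 1 / (π * π^(2*(N+1)) * K) := by
      rw [hL]
      calc (((N:ℝ)+1) * 3^N / 4^(N+1)) * (1 / (π * π^(2*(N+1)) * K))
          ≤ 1 * (1 / (π * π^(2*(N+1)) * K)) := by
            apply mul_le_mul_of_nonneg_right _ (by positivity)
            rw [div_le_one h4]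
            linarith
        _ = 1 / (π * π^(2*(N+1)) * K) := one_mul _
    have hstep2 : 1 / (π * π^(2*(N+1)) * K) < RHS1 := by
      rw [hRHS1]
      have h1π : 1/π < Real.sqrt (8 / π^3) := by
        have e1 : 1/π = Real.sqrt ((1/π)^2) := by
          rw [Real.sqrt_sq (by positivity)]
        rw [e1]
        apply Real.sqrt_lt_sqrt (by positivity)
        have hπ8 : π < 8 := by nlinarith [Real.pi_lt_d2]
        rw [div_pow, one_pow, div_lt_div_iff₀ (by positivity) (by positivity)]
        nlinarith [mul_pos (mul_pos hπ hπ) (sub_pos.mpr hπ8)]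
      have h2 : Real.sqrt (8/π^3) ≤ Real.sqrt (8/π^3) * Real.sqrt ((N:ℝ)+1) := by
        nth_rewrite 1 [← mul_one (Real.sqrt (8/π^3))]
        apply mul_le_mul_of_nonneg_left _ (Real.sqrt_nonneg _)
        have : Real.sqrt 1 ≤ Real.sqrt ((N:ℝ)+1) := Real.sqrt_le_sqrt (by push_cast; linarith)
        simpa using this
      have h3 : 1/π < Real.sqrt (8/π^3) * Real.sqrt ((N:ℝ)+1) := lt_of_lt_of_le h1π h2
      calc 1 / (π * π^(2*(N+1)) * K) = (1/π) * (1 / (π^(2*(N+1)) * K)) := by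
            ring
        _ < (Real.sqrt (8/π^3) * Real.sqrt ((N:ℝ)+1)) * (1 / (π^(2*(N+1)) * K)) := by
            apply mul_lt_mul_of_pos_right h3 (by positivity)
        _ = Real.sqrt (8/π^3) * Real.sqrt ((N:ℝ)+1) / (π^(2*(N+1)) * K) := by
            ring
    exact lt_of_le_of_lt hstep1 hstep2
  have hmain : T < RHS1 := lt_of_le_of_lt hkey hnum
  constructor
  · -- part 1
    convert hmain using 2
    push_cast
    ring
  · -- part 2
    set RHS2 : ℝ := (2/π) ^ ((3:ℝ)/4) * (((N:ℕ)+1 : ℕ) : ℝ) ^ ((1:ℝ)/4) / π^(N+1) / Real.sqrt K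
      with hRHS2
    have hRHS2nn : 0 ≤ RHS2 := by
      apply div_nonneg (div_nonneg (mul_nonneg ?_ ?_) (by positivity)) (Real.sqrt_nonneg _)
      · exact Real.rpow_nonneg (by positivity) _
      · exact Real.rpow_nonneg (by positivity) _
    have hx2π : (0:ℝ) ≤ 2/π := by positivity
    have hsq : RHS2 ^ 2 = RHS1 := by
      rw [hRHS2, hRHS1]
      rw [div_pow, div_pow, mul_pow]
      have e1 : (((2:ℝ)/π) ^ ((3:ℝ)/4)) ^ (2:ℕ) = Real.sqrt (8/π^3) := by
        rw [← Real.rpow_natCast ((2/π:ℝ) ^ ((3:ℝ)/4)) 2, ← Real.rpow_mul hx2π]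
        rw [show ((3:ℝ)/4) * ((2:ℕ):ℝ) = ((3:ℕ):ℝ) * (1/2) by push_cast; ring]
        rw [Real.rpow_mul hx2π, Real.rpow_natCast]
        rw [show ((2:ℝ)/π)^(3:ℕ) = 8/π^3 by rw [div_pow]; norm_num]
        rw [← Real.sqrt_eq_rpow]
      have e2 : ((((N+1:ℕ)):ℝ) ^ ((1:ℝ)/4)) ^ (2:ℕ) = Real.sqrt ((N:ℝ)+1) := by
        rw [← Real.rpow_natCast ((((N+1:ℕ)):ℝ) ^ ((1:ℝ)/4)) 2,
          ← Real.rpow_mul (by positivity)]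
        rw [show ((1:ℝ)/4) * ((2:ℕ):ℝ) = 1/2 by push_cast; ring]
        rw [← Real.sqrt_eq_rpow]
        norm_num
      have e3 : ((π:ℝ)^(N+1)) ^ (2:ℕ) = π^(2*(N+1)) := by
        rw [← pow_mul, Nat.mul_comm]
      have e4 : (Real.sqrt (K:ℝ)) ^ (2:ℕ) = (K:ℝ) := Real.sq_sqrt hKR.le
      rw [e1, e2, e3, e4]
      rw [div_div]
    have hlt : T < RHS2 ^ 2 := by rw [hsq]; exact hmain
    have hfin : Real.sqrt T < RHS2 := by
      have h5 : Real.sqrt T < Real.sqrt (RHS2^2) := Real.sqrt_lt_sqrt hTnn hlt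
      rwa [Real.sqrt_sq hRHS2nn] at h5
    exact hfin
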